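/- Let n be an even positive integer, 0 < p < 1, and let t be an even positive integer. Then the involution walk satisfies ‖P^{*t} − U‖_TV ≥ (1/2)·(1 − 2p)^{t n /2}. -/

import Mathlib

open Finset Equiv Equiv.Perm

/-- One step of the involution walk on `S_n`: an involution `σ` with `s` transpositions
(so `σ.support.card = 2*s`) has probability
`(n/2 choose s) * p^(n/2-s) * (1-p)^s * 2^s * s! * (n-2s)! / n!`;
non-involutions have probability `0`. -/
noncomputable def stepP (n : ℕ) (p : ℝ) (σ : Equiv.Perm (Fin n)) : ℝ :=
  if σ * σ = 1 then
    ((n / 2).choose (σ.support.card / 2) : ℝ) * p ^ (n / 2 - σ.support.card / 2) *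
      (1 - p) ^ (σ.support.card / 2) * (2 : ℝ) ^ (σ.support.card / 2) *
      (Nat.factorial (σ.support.card / 2) : ℝ) * (Nat.factorial (n - σ.support.card) : ℝ) /
      (Nat.factorial n : ℝ)
  else 0

/-- The `t`-step distribution of the involution walk:
`P^{*t}(g) = Σ_{g₁⋯g_t = g} P(g₁)⋯P(g_t)`, defined by convolution. -/
noncomputable def convPow (n : ℕ) (p : ℝ) : ℕ → Equiv.Perm (Fin n) → ℝ
  | 0 => fun g => if g = 1 then 1 else 0
  | t + 1 => fun g => ∑ h : Equiv.Perm (Fin n), stepP n p h * convPow n p t (h⁻¹ * g)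

/-- Total variation distance between `P^{*t}` and the uniform distribution:
`(1/2) Σ_g |P^{*t}(g) − 1/n!|`. -/
noncomputable def tvDist (n : ℕ) (p : ℝ) (t : ℕ) : ℝ :=
  (1 / 2) * ∑ g : Equiv.Perm (Fin n), |convPow n p t g - 1 / (Nat.factorial n : ℝ)|

section Count
variable {α : Type} [Fintype α] [DecidableEq α]

def invSet (α : Type) [Fintype α] [DecidableEq α] (s : ℕ) : Finset (Perm α) :=
  univ.filter fun σ => σ * σ = 1 ∧ #σ.support = 2 * s

omit [Fintype α] [DecidableEq α] in
lemma apply_apply_of_sq {σ : Perm α} (h : σ * σ = 1) (x : α) : σ (σ x) = x := by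
  have := congrArg (fun f : Perm α => f x) h
  simpa [Equiv.Perm.mul_apply] using this

omit [Fintype α] [DecidableEq α] in
lemma sq_of_subtype {p : α → Prop} [DecidablePred p] (τ : Perm (Subtype p)) (h : τ * τ = 1) :
    ofSubtype τ * ofSubtype τ = 1 := by
  rw [← map_mul, h, map_one]

omit [Fintype α] [DecidableEq α] in
lemma subtypePerm_sq {p : α → Prop} [DecidablePred p] {σ : Perm α} (hsq : σ * σ = 1)
    (h : ∀ x, p (σ x) ↔ p x) : σ.subtypePerm h * σ.subtypePerm h = 1 := by
  ext x
  simp only [Equiv.Perm.mul_apply, subtypePerm_apply, Perm.one_apply]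
  exact apply_apply_of_sq hsq _

lemma fiber_fixed_card (a : α) (s : ℕ) :
    #((invSet α s).filter (fun σ => σ a = a)) = #(invSet {x : α // x ≠ a} s) := by
  have hiff : ∀ (σ : Perm α), σ a = a → ∀ x : α, σ x ≠ a ↔ x ≠ a := by
    intro σ ha x
    constructor
    · intro hx h
      exact hx (by rw [h, ha])
    · intro hx h
      exact hx (σ.injective (h.trans ha.symm))
  refine Finset.card_bij'
    (fun σ hσ => σ.subtypePerm (hiff σ (mem_filter.mp hσ).2))
    (fun τ _ => ofSubtype τ) ?_ ?_ ?_ ?_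
  · intro σ hσ
    obtain ⟨hσ1, ha⟩ := mem_filter.mp hσ
    obtain ⟨-, hsq, hcard⟩ := mem_filter.mp hσ1
    have hof : ofSubtype (σ.subtypePerm (p := fun x => x ≠ a) (hiff σ ha)) = σ :=
      ofSubtype_subtypePerm _ (fun x hx => fun hxa => hx (by rw [hxa, ha]))
    simp only [invSet, mem_filter, mem_univ, true_and]
    refine ⟨subtypePerm_sq hsq _, ?_⟩
    have hsupp := Perm.support_ofSubtype (σ.subtypePerm (p := fun x => x ≠ a) (hiff σ ha))
    rw [hof] at hsupp
    rw [← hcard, hsupp, Finset.card_map]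
  · intro τ hτ
    obtain ⟨-, hsq, hcard⟩ := mem_filter.mp hτ
    simp only [invSet, mem_filter, mem_univ, true_and]
    refine ⟨⟨sq_of_subtype τ hsq, ?_⟩, ofSubtype_apply_of_not_mem τ (by simp)⟩
    rw [Perm.support_ofSubtype, Finset.card_map, hcard]
  · intro σ hσ
    exact ofSubtype_subtypePerm _ (fun x hx => fun hxa =>
      hx (by rw [hxa, (mem_filter.mp hσ).2]))
  · intro τ _
    exact subtypePerm_ofSubtype τ

lemma fiber_move_card {a b : α} (hab : b ≠ a) (s : ℕ) :
    #((invSet α (s+1)).filter (fun σ => σ a = b)) =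
      #(invSet {x : α // x ≠ a ∧ x ≠ b} s) := by
  have hmem : ∀ (σ : Perm α), σ ∈ (invSet α (s+1)).filter (fun σ => σ a = b) →
      (σ * σ = 1 ∧ #σ.support = 2*(s+1)) ∧ σ a = b := by
    intro σ hσ
    obtain ⟨h1, ha⟩ := mem_filter.mp hσ
    obtain ⟨-, hsq, hc⟩ := mem_filter.mp h1
    exact ⟨⟨hsq, hc⟩, ha⟩
  have hba : ∀ (σ : Perm α), σ ∈ (invSet α (s+1)).filter (fun σ => σ a = b) → σ b = a := by
    intro σ hσ
    obtain ⟨⟨hsq, -⟩, ha⟩ := hmem σ hσ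
    rw [← ha]; exact apply_apply_of_sq hsq a
  have hiff : ∀ (σ : Perm α), σ ∈ (invSet α (s+1)).filter (fun σ => σ a = b) →
      ∀ x : α, (σ x ≠ a ∧ σ x ≠ b) ↔ (x ≠ a ∧ x ≠ b) := by
    intro σ hσ x
    obtain ⟨⟨hsq, -⟩, ha⟩ := hmem σ hσ
    have hb := hba σ hσ
    have h1 : σ x = a ↔ x = b := by
      constructor
      · intro h; exact σ.injective (h.trans hb.symm)
      · rintro rfl; exact hb
    have h2 : σ x = b ↔ x = a := by
      constructor
      · intro h; exact σ.injective (h.trans ha.symm)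
      · rintro rfl; exact ha
    rw [Ne, Ne, Ne, Ne, h1, h2]
    tauto
  have hdisj : ∀ τ : Perm {x : α // x ≠ a ∧ x ≠ b},
      (ofSubtype τ).Disjoint (Equiv.swap a b) := by
    intro τ x
    by_cases hxa : x = a
    · subst hxa; exact Or.inl (ofSubtype_apply_of_not_mem τ (by simp))
    by_cases hxb : x = b
    · subst hxb; exact Or.inl (ofSubtype_apply_of_not_mem τ (by simp))
    · exact Or.inr (Equiv.swap_apply_of_ne_of_ne hxa hxb)
  have key : ∀ (σ : Perm α) (hσ : σ ∈ (invSet α (s+1)).filter (fun σ => σ a = b)),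
      ofSubtype (σ.subtypePerm (p := fun x => x ≠ a ∧ x ≠ b) (hiff σ hσ)) * Equiv.swap a b = σ := by
    intro σ hσ
    obtain ⟨⟨hsq, -⟩, ha⟩ := hmem σ hσ
    have hb := hba σ hσ
    ext x
    rw [Equiv.Perm.mul_apply]
    rcases eq_or_ne x a with rfl | hxa
    · rw [Equiv.swap_apply_left, ofSubtype_apply_of_not_mem _ (by simp), ha]
    rcases eq_or_ne x b with rfl | hxb
    · rw [Equiv.swap_apply_right, ofSubtype_apply_of_not_mem _ (by simp), hb]
    · rw [Equiv.swap_apply_of_ne_of_ne hxa hxb, ofSubtype_apply_of_mem _ ⟨hxa, hxb⟩,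
        subtypePerm_apply]
  refine Finset.card_bij'
    (fun σ hσ => σ.subtypePerm (hiff σ hσ))
    (fun τ _ => ofSubtype τ * Equiv.swap a b) ?_ ?_ ?_ ?_
  · intro σ hσ
    obtain ⟨⟨hsq, hcard⟩, ha⟩ := hmem σ hσ
    simp only [invSet, mem_filter, mem_univ, true_and]
    refine ⟨subtypePerm_sq hsq _, ?_⟩
    have hc := (hdisj (σ.subtypePerm (hiff σ hσ))).card_support_mul
    rw [key σ hσ, Perm.support_ofSubtype, Finset.card_map,
      Equiv.Perm.card_support_swap hab.symm] at hc
    omega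
  · intro τ hτ
    obtain ⟨-, hsq, hcard⟩ := mem_filter.mp hτ
    have hc := (hdisj τ).card_support_mul
    rw [Perm.support_ofSubtype, Finset.card_map, hcard,
      Equiv.Perm.card_support_swap hab.symm] at hc
    simp only [mem_filter, invSet, mem_univ, true_and]
    refine ⟨⟨?_, by omega⟩, ?_⟩
    · have hcm := (hdisj τ).commute
      calc ofSubtype τ * Equiv.swap a b * (ofSubtype τ * Equiv.swap a b)
          = ofSubtype τ * ofSubtype τ * (Equiv.swap a b * Equiv.swap a b) :=
            (hcm.symm.mul_mul_mul_comm _ _)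
        _ = 1 := by rw [sq_of_subtype τ hsq, Equiv.swap_mul_self, one_mul]
    · rw [Equiv.Perm.mul_apply, Equiv.swap_apply_left,
        ofSubtype_apply_of_not_mem τ (by simp)]
  · intro σ hσ
    exact key σ hσ
  · intro τ hτ
    ext x
    rw [subtypePerm_apply]
    simp only
    rw [Equiv.Perm.mul_apply, Equiv.swap_apply_of_ne_of_ne x.2.1 x.2.2,
      ofSubtype_apply_of_mem τ x.2]

lemma invSet_zero : invSet α 0 = {1} := by
  ext σ
  simp [invSet, Finset.card_eq_zero, support_eq_empty_iff]
  rintro rfl; simp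

lemma invSet_empty {s : ℕ} (h : Fintype.card α < 2 * s) : invSet α s = ∅ := by
  ext σ
  simp only [invSet, mem_filter, mem_univ, true_and, Finset.notMem_empty, iff_false, not_and]
  intro _ hc
  have := Finset.card_le_univ σ.support
  rw [hc] at this
  omega

theorem invSet_card_mul (n : ℕ) : ∀ (α : Type) [Fintype α] [DecidableEq α],
    Fintype.card α = n → ∀ s : ℕ, 2 * s ≤ n →
    #(invSet α s) * (2 ^ s * s.factorial * (n - 2 * s).factorial) = n.factorial := by
  induction n using Nat.strong_induction_on with
  | _ n IH =>
  intro α _ _ hcard s hs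
  match s, hs with
  | 0, _ => simp [invSet_zero]
  | s + 1, hs =>
    obtain ⟨k, rfl⟩ : ∃ k, n = k + 2 := ⟨n - 2, by omega⟩
    have hk : 2 * s ≤ k := by omega
    have : Nonempty α := by rw [← Fintype.card_pos_iff, hcard]; omega
    obtain ⟨a⟩ := this
    have hfib : #(invSet α (s+1)) =
        ∑ b : α, #((invSet α (s+1)).filter (fun σ => σ a = b)) :=
      Finset.card_eq_sum_card_fiberwise (fun σ _ => mem_univ _)
    rw [← Finset.add_sum_erase _ _ (mem_univ a)] at hfib
    -- the fixed fiber
    have hcard1 : Fintype.card {x : α // x ≠ a} = k + 1 := by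
      rw [Fintype.card_subtype]
      rw [Finset.filter_ne' univ a, Finset.card_erase_of_mem (mem_univ a), Finset.card_univ,
        hcard]
      omega
    have hNa : #((invSet α (s+1)).filter (fun σ => σ a = a)) *
        (2 ^ (s+1) * (s+1).factorial * (k - 2*s).factorial) = (k - 2*s) * (k+1).factorial := by
      rw [fiber_fixed_card a (s+1)]
      by_cases hle : 2 * (s+1) ≤ k + 1
      · obtain ⟨m, hm⟩ : ∃ m, k - 2*s = m + 1 := ⟨k - 2*s - 1, by omega⟩
        have hm' : k + 1 - 2*(s+1) = m := by omega
        have hIH := IH (k+1) (by omega) {x : α // x ≠ a} hcard1 (s+1) hle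
        rw [hm'] at hIH
        calc #(invSet {x : α // x ≠ a} (s+1)) * (2 ^ (s+1) * (s+1).factorial *
              (k - 2*s).factorial)
            = (m+1) * (#(invSet {x : α // x ≠ a} (s+1)) *
              (2 ^ (s+1) * (s+1).factorial * m.factorial)) := by
              rw [hm, Nat.factorial_succ m]; ring
          _ = (k - 2*s) * (k+1).factorial := by rw [hIH, hm]
      · have h0 : k - 2*s = 0 := by omega
        rw [invSet_empty (by omega : Fintype.card {x : α // x ≠ a} < 2 * (s+1))]
        simp [h0]
    -- the moving fibers
    have hNb : ∀ b ∈ univ.erase a, #((invSet α (s+1)).filter (fun σ => σ a = b)) *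
        (2 ^ (s+1) * (s+1).factorial * (k - 2*s).factorial) =
        2 * (s+1) * k.factorial := by
      intro b hb
      have hab : b ≠ a := (Finset.mem_erase.mp hb).1
      have hcard2 : Fintype.card {x : α // x ≠ a ∧ x ≠ b} = k := by
        rw [Fintype.card_subtype]
        have : (univ.filter fun x : α => x ≠ a ∧ x ≠ b) = univ \ {a, b} := by
          ext x; simp [not_or]
        rw [this, Finset.card_sdiff_of_subset (Finset.subset_univ _), Finset.card_univ, hcard,
          Finset.card_pair hab.symm]
        omega
      have hIH := IH k (by omega) {x : α // x ≠ a ∧ x ≠ b} hcard2 s hk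
      have hk' : k - 2*s = k - 2*s := rfl
      rw [fiber_move_card hab s]
      calc #(invSet {x : α // x ≠ a ∧ x ≠ b} s) *
            (2 ^ (s+1) * (s+1).factorial * (k - 2*s).factorial)
          = 2 * (s+1) * (#(invSet {x : α // x ≠ a ∧ x ≠ b} s) *
            (2 ^ s * s.factorial * (k - 2*s).factorial)) := by
            rw [pow_succ, Nat.factorial_succ]; ring
        _ = 2 * (s+1) * k.factorial := by rw [hIH]
    have hsub : k + 2 - 2 * (s+1) = k - 2*s := by omega
    rw [hsub, hfib, add_mul, Finset.sum_mul, hNa, Finset.sum_congr rfl hNb,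
      Finset.sum_const, Finset.card_erase_of_mem (mem_univ a), Finset.card_univ, hcard,
      smul_eq_mul]
    have : (k+2) - 1 = k + 1 := by omega
    rw [this]
    have hfac : (k+2).factorial = (k+2) * ((k+1) * k.factorial) := by
      rw [Nat.factorial_succ, Nat.factorial_succ]
    rw [hfac]
    have h1 : (k+1).factorial = (k+1) * k.factorial := Nat.factorial_succ k
    rw [h1]
    have : k - 2*s + (2*(s+1)) = k + 2 := by omega
    calc (k - 2*s) * ((k+1) * k.factorial) + (k+1) * (2*(s+1) * k.factorial)
        = ((k - 2*s) + 2*(s+1)) * ((k+1) * k.factorial) := by ring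
      _ = (k+2) * ((k+1) * k.factorial) := by rw [this]
end Count


section Analysis
variable {n : ℕ}

noncomputable def chi (n : ℕ) (g : Perm (Fin n)) : ℝ := ((Perm.sign g : ℤ) : ℝ)

lemma chi_mul (g h : Perm (Fin n)) : chi n (g * h) = chi n g * chi n h := by
  unfold chi
  rw [map_mul, Units.val_mul, Int.cast_mul]

lemma abs_chi (g : Perm (Fin n)) : |chi n g| = 1 := by
  unfold chi
  rcases Int.units_eq_one_or (Perm.sign g) with h | h <;> rw [h] <;> norm_num

lemma supp_even {σ : Perm (Fin n)} (h : σ * σ = 1) :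
    #σ.support = 2 * Multiset.card σ.cycleType := by
  have horder : orderOf σ ∣ 2 := orderOf_dvd_of_pow_eq_one (by rwa [pow_two])
  have hall : ∀ c ∈ σ.cycleType, c = 2 := by
    intro c hc
    have h2 : 2 ≤ c := Perm.two_le_of_mem_cycleType hc
    have hdvd : c ∣ 2 := (Multiset.dvd_lcm hc).trans (by rwa [Perm.lcm_cycleType])
    have := Nat.le_of_dvd (by norm_num) hdvd
    omega
  have hrep : σ.cycleType = Multiset.replicate (Multiset.card σ.cycleType) 2 :=
    Multiset.eq_replicate.mpr ⟨rfl, hall⟩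
  conv_lhs => rw [← Perm.sum_cycleType, hrep]
  rw [Multiset.sum_replicate, smul_eq_mul, mul_comm]

lemma chi_involution {σ : Perm (Fin n)} {s : ℕ} (h : σ * σ = 1) (hc : #σ.support = 2 * s) :
    chi n σ = (-1 : ℝ) ^ s := by
  have hcard : Multiset.card σ.cycleType = s := by
    have := supp_even h
    omega
  unfold chi
  rw [Perm.sign_of_cycleType, Perm.sum_cycleType, hc, hcard]
  rw [Units.val_pow_eq_pow_val]
  push_cast
  have : 2 * s + s = 2 * s + s := rfl
  rw [pow_add, pow_mul]
  norm_num

lemma step_sum (p : ℝ) (hne : Even n) :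
    ∑ σ : Perm (Fin n), stepP n p σ * chi n σ = (2 * p - 1) ^ (n / 2) := by
  obtain ⟨m, hm⟩ := hne
  have h0 : ∑ σ : Perm (Fin n), stepP n p σ * chi n σ
      = ∑ σ ∈ univ.filter (fun σ : Perm (Fin n) => σ * σ = 1), stepP n p σ * chi n σ := by
    symm
    apply Finset.sum_filter_of_ne
    intro σ _ hne0
    by_contra hsq
    apply hne0
    rw [stepP, if_neg hsq, zero_mul]
  have hmaps : ∀ σ ∈ univ.filter (fun σ : Perm (Fin n) => σ * σ = 1),
      #σ.support / 2 ∈ Finset.range (n / 2 + 1) := by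
    intro σ _
    rw [Finset.mem_range]
    have h1 : #σ.support ≤ n := by
      have := Finset.card_le_univ σ.support
      simpa using this
    omega
  rw [h0, ← Finset.sum_fiberwise_of_maps_to hmaps]
  have hinner : ∀ s ∈ Finset.range (n/2+1),
      ∑ σ ∈ (univ.filter (fun σ : Perm (Fin n) => σ*σ=1)).filter
          (fun σ => #σ.support / 2 = s),
        stepP n p σ * chi n σ
      = ((n/2).choose s : ℝ) * p ^ (n/2 - s) * (p - 1) ^ s := by
    intro s hs
    have hs' : 2 * s ≤ n := by rw [Finset.mem_range] at hs; omega
    have hset : (univ.filter (fun σ : Perm (Fin n) => σ*σ=1)).filter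
        (fun σ => #σ.support / 2 = s) = invSet (Fin n) s := by
      ext σ
      simp only [invSet, Finset.mem_filter, Finset.mem_univ, true_and]
      constructor
      · rintro ⟨hsq, hdiv⟩
        refine ⟨hsq, ?_⟩
        have := supp_even hsq
        omega
      · rintro ⟨hsq, hcs⟩
        exact ⟨hsq, by omega⟩
    rw [hset]
    have hconst : ∀ σ ∈ invSet (Fin n) s, stepP n p σ * chi n σ =
        ((n/2).choose s : ℝ) * p ^ (n/2 - s) * (1-p)^s * 2^s * (s.factorial : ℝ)
          * ((n - 2*s).factorial : ℝ) / (n.factorial : ℝ) * (-1)^s := by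
      intro σ hσ
      obtain ⟨-, hsq, hcs⟩ := Finset.mem_filter.mp hσ
      have hdiv : #σ.support / 2 = s := by omega
      rw [stepP, if_pos hsq, hdiv, hcs, chi_involution hsq hcs]
    rw [Finset.sum_congr rfl hconst, Finset.sum_const, nsmul_eq_mul]
    have hcount := invSet_card_mul n (Fin n) (by simp) s hs'
    have hcast : (#(invSet (Fin n) s) : ℝ) * ((2:ℝ)^s * (s.factorial:ℝ) *
        ((n-2*s).factorial:ℝ)) = (n.factorial : ℝ) := by
      exact_mod_cast congrArg (Nat.cast : ℕ → ℝ) hcount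
    have hfacpos : (0:ℝ) < (n.factorial : ℝ) := by
      exact_mod_cast n.factorial_pos
    have hups : (1-p)^s * (-1:ℝ)^s = (p-1)^s := by
      rw [← mul_pow]; congr 1; ring
    calc (#(invSet (Fin n) s) : ℝ) * (((n/2).choose s : ℝ) * p ^ (n/2 - s) * (1-p)^s * 2^s
          * (s.factorial : ℝ) * ((n - 2*s).factorial : ℝ) / (n.factorial : ℝ) * (-1)^s)
        = ((n/2).choose s : ℝ) * p ^ (n/2 - s) * ((1-p)^s * (-1)^s) *
          ((#(invSet (Fin n) s) : ℝ) * ((2:ℝ)^s * (s.factorial:ℝ) * ((n-2*s).factorial:ℝ))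
            / (n.factorial : ℝ)) := by ring
      _ = ((n/2).choose s : ℝ) * p ^ (n/2 - s) * (p - 1) ^ s := by
          rw [hcast, hups, div_self hfacpos.ne']
          ring
  rw [Finset.sum_congr rfl hinner]
  have hap := add_pow (p-1) p (n/2)
  calc ∑ s ∈ Finset.range (n/2+1), ((n/2).choose s : ℝ) * p ^ (n/2 - s) * (p - 1) ^ s
      = ∑ s ∈ Finset.range (n/2+1), (p-1)^s * p ^ (n/2 - s) * ((n/2).choose s : ℝ) := by
        apply Finset.sum_congr rfl; intro s _; ring
    _ = (p - 1 + p) ^ (n/2) := (add_pow (p-1) p (n/2)).symm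
    _ = (2*p - 1) ^ (n/2) := by ring_nf

lemma chi_one : chi n 1 = 1 := by unfold chi; simp

lemma conv_sum (p : ℝ) (t : ℕ) :
    ∑ g : Perm (Fin n), convPow n p t g * chi n g =
      (∑ σ : Perm (Fin n), stepP n p σ * chi n σ) ^ t := by
  induction t with
  | zero =>
    simp only [convPow, pow_zero, ite_mul, one_mul, zero_mul]
    rw [Finset.sum_ite_eq' univ (1 : Perm (Fin n)) (chi n)]
    simp [chi_one]
  | succ t ih =>
    simp only [convPow]
    rw [pow_succ']
    calc ∑ g : Perm (Fin n),
          (∑ h : Perm (Fin n), stepP n p h * convPow n p t (h⁻¹ * g)) * chi n g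
        = ∑ g : Perm (Fin n), ∑ h : Perm (Fin n),
            stepP n p h * convPow n p t (h⁻¹ * g) * chi n g := by
          refine Finset.sum_congr rfl fun g _ => ?_
          rw [Finset.sum_mul]
      _ = ∑ h : Perm (Fin n), ∑ g : Perm (Fin n),
            stepP n p h * convPow n p t (h⁻¹ * g) * chi n g := Finset.sum_comm
      _ = ∑ h : Perm (Fin n), stepP n p h * chi n h *
            ∑ k : Perm (Fin n), convPow n p t k * chi n k := by
          refine Finset.sum_congr rfl fun h _ => ?_
          have heq := Fintype.sum_equiv (Equiv.mulLeft h)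
            (fun k => stepP n p h * chi n h * (convPow n p t k * chi n k))
            (fun x => stepP n p h * convPow n p t (h⁻¹ * x) * chi n x)
            (fun k => by
              simp only [Equiv.coe_mulLeft, inv_mul_cancel_left]
              rw [chi_mul]
              ring)
          rw [← heq, ← Finset.mul_sum]
      _ = (∑ σ : Perm (Fin n), stepP n p σ * chi n σ) *
            ∑ k : Perm (Fin n), convPow n p t k * chi n k := by
          rw [← Finset.sum_mul]
      _ = (∑ σ : Perm (Fin n), stepP n p σ * chi n σ) *
            (∑ σ : Perm (Fin n), stepP n p σ * chi n σ) ^ t := by rw [ih]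

lemma sum_chi (hn : 2 ≤ n) : ∑ g : Perm (Fin n), chi n g = 0 := by
  have h01 : (⟨0, by omega⟩ : Fin n) ≠ ⟨1, by omega⟩ := by simp [Fin.ext_iff]
  set τ := Equiv.swap (⟨0, by omega⟩ : Fin n) ⟨1, by omega⟩ with hτ
  have hsign : chi n τ = -1 := by
    unfold chi
    rw [hτ, Equiv.Perm.sign_swap h01]
    simp
  have key : ∑ g : Perm (Fin n), chi n (τ * g) = ∑ g : Perm (Fin n), chi n g :=
    Fintype.sum_equiv (Equiv.mulLeft τ) _ _ (fun g => by rw [Equiv.coe_mulLeft])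
  have key2 : ∑ g : Perm (Fin n), chi n (τ * g) = - ∑ g : Perm (Fin n), chi n g := by
    rw [← Finset.sum_neg_distrib]
    refine Finset.sum_congr rfl fun g _ => ?_
    rw [chi_mul, hsign]
    ring
  rw [key] at key2
  linarith

end Analysis

/-- Parity lower bound for the involution walk at even times. -/
theorem stmt2 (n : ℕ) (hn : 0 < n) (hne : Even n) (p : ℝ) (hp0 : 0 < p) (hp1 : p < 1)
    (t : ℕ) (ht : 0 < t) (hte : Even t) :
    tvDist n p t ≥ (1 / 2) * (1 - 2 * p) ^ (t * n / 2) := by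
  obtain ⟨m, hm⟩ := hne
  have hn2 : 2 ≤ n := by omega
  have hcs := step_sum (n := n) p ⟨m, hm⟩
  have hconv := conv_sum (n := n) p t
  have hchi0 := sum_chi hn2
  set c := ∑ σ : Perm (Fin n), stepP n p σ * chi n σ with hc
  have hD : ∑ g : Perm (Fin n), (convPow n p t g - 1/(n.factorial:ℝ)) * chi n g = c ^ t := by
    have hterm : ∀ g : Perm (Fin n), (convPow n p t g - 1/(n.factorial:ℝ)) * chi n g
        = convPow n p t g * chi n g - (1/(n.factorial:ℝ)) * chi n g := fun g => by ring
    rw [Finset.sum_congr rfl (fun g _ => hterm g), Finset.sum_sub_distrib,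
      ← Finset.mul_sum, hchi0, mul_zero, sub_zero, hconv]
  have habs : c ^ t ≤ ∑ g : Perm (Fin n), |convPow n p t g - 1/(n.factorial:ℝ)| := by
    calc c ^ t = ∑ g : Perm (Fin n), (convPow n p t g - 1/(n.factorial:ℝ)) * chi n g :=
          hD.symm
      _ ≤ |∑ g : Perm (Fin n), (convPow n p t g - 1/(n.factorial:ℝ)) * chi n g| :=
          le_abs_self _
      _ ≤ ∑ g : Perm (Fin n), |(convPow n p t g - 1/(n.factorial:ℝ)) * chi n g| :=
          Finset.abs_sum_le_sum_abs _ _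
      _ = ∑ g : Perm (Fin n), |convPow n p t g - 1/(n.factorial:ℝ)| := by
          refine Finset.sum_congr rfl fun g _ => ?_
          rw [abs_mul, abs_chi, mul_one]
  have hexp : c ^ t = (1 - 2*p) ^ (t * n / 2) := by
    have h1 : n / 2 = m := by omega
    have h2 : t * n = 2 * (m * t) := by rw [hm]; ring
    have h3 : t * n / 2 = m * t := by omega
    rw [hcs, h1, ← pow_mul, h3]
    have hneg : (2*p - 1) = -(1 - 2*p) := by ring
    rw [hneg, (hte.mul_left m).neg_pow]
  rw [ge_iff_le, tvDist]
  rw [hexp] at habs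
  linarith
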